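/- With Q(A) = ∫_C U(σ) A U(σ)* dν(σ) as above, suppose ν charges all open subsets of C, U is continuous and one-to-one, and U(σ₀) = 1 for some σ₀ ∈ C. If A satisfies Tr[(QA)*(QA)] = Tr[A* A], then U(σ) A U(σ)* = A for all σ ∈ C; i.e., the eigenspace of Q with eigenvalue 1 (acting on Hilbert–Schmidt operators) is exactly the commutant of {U(σ) : σ ∈ C}. -/

import Mathlib

open Matrix MeasureTheory
open scoped Matrix.Norms.L2Operator

/-- The averaged conjugation operator `Q(A) = ∫ U(σ) A U(σ)* dν(σ)`. -/
noncomputable def Qop {C : Type*} [MeasurableSpace C] {n : ℕ}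
    (ν : Measure C) (U : C → Matrix (Fin n) (Fin n) ℂ)
    (A : Matrix (Fin n) (Fin n) ℂ) : Matrix (Fin n) (Fin n) ℂ :=
  ∫ σ, U σ * A * (U σ)ᴴ ∂ν

lemma trace_conjTranspose_mul_self_eq {n : ℕ} (M : Matrix (Fin n) (Fin n) ℂ) :
    Matrix.trace (Mᴴ * M) = ((∑ j, ∑ i, Complex.normSq (M i j) : ℝ) : ℂ) := by
  simp only [Matrix.trace, Matrix.diag, Matrix.mul_apply, Matrix.conjTranspose_apply]
  push_cast
  congr 1; ext j; congr 1; ext i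
  rw [Complex.normSq_eq_conj_mul_self, RCLike.star_def]

lemma eq_zero_of_trace_conjTranspose_mul_self {n : ℕ} (M : Matrix (Fin n) (Fin n) ℂ)
    (h : Matrix.trace (Mᴴ * M) = 0) : M = 0 := by
  rw [trace_conjTranspose_mul_self_eq] at h
  have h' : (∑ j, ∑ i, Complex.normSq (M i j) : ℝ) = 0 := by exact_mod_cast h
  ext i j
  have hnn : ∀ j ∈ (Finset.univ : Finset (Fin n)),
      0 ≤ ∑ i, Complex.normSq (M i j) :=
    fun j _ => Finset.sum_nonneg fun i _ => Complex.normSq_nonneg _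
  have hj := (Finset.sum_eq_zero_iff_of_nonneg hnn).mp h' j (Finset.mem_univ j)
  have hi := (Finset.sum_eq_zero_iff_of_nonneg
    (fun i _ => Complex.normSq_nonneg (M i j))).mp hj i (Finset.mem_univ i)
  simpa using Complex.normSq_eq_zero.mp hi

/-- If `ν` charges all open sets, `U` is continuous, one-to-one, and takes the value `1`,
then any Hilbert–Schmidt norm equality case `Tr[(QA)*(QA)] = Tr[A*A]` forces
`U(σ) A U(σ)* = A` for every `σ`: the eigenspace of `Q` with eigenvalue `1` is exactly
the commutant of `{U(σ) : σ ∈ C}`. -/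
theorem Qop_fixed_points_eq_commutant {C : Type*} [MetricSpace C] [CompactSpace C]
    [MeasurableSpace C] [BorelSpace C] {n : ℕ}
    (ν : Measure C) [IsProbabilityMeasure ν]
    (hν : ∀ O : Set C, IsOpen O → O.Nonempty → 0 < ν O)
    (U : C → Matrix (Fin n) (Fin n) ℂ)
    (hUcont : Continuous U) (hUinj : Function.Injective U)
    (hUunit : ∀ σ, U σ ∈ Matrix.unitaryGroup (Fin n) ℂ)
    (σ₀ : C) (hσ₀ : U σ₀ = 1)
    (A : Matrix (Fin n) (Fin n) ℂ)
    (hA : Matrix.trace ((Qop ν U A)ᴴ * Qop ν U A) = Matrix.trace (Aᴴ * A)) :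
    ∀ σ, U σ * A * (U σ)ᴴ = A := by
  haveI : ν.IsOpenPosMeasure := ⟨fun O hO hne => (hν O hO hne).ne'⟩
  set Q : Matrix (Fin n) (Fin n) ℂ := Qop ν U A with hQ
  set f : C → Matrix (Fin n) (Fin n) ℂ := fun σ => U σ * A * (U σ)ᴴ with hfdef
  have hfc : Continuous f := by
    exact ((hUcont.matrix_mul continuous_const).matrix_mul hUcont.matrix_conjTranspose)
  have hfint : Integrable f ν :=
    hfc.integrable_of_hasCompactSupport ((isClosed_tsupport f).isCompact)
  -- unitary relations
  have hU1 : ∀ σ, (U σ)ᴴ * U σ = 1 := fun σ => by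
    have := (hUunit σ).1
    rwa [Matrix.star_eq_conjTranspose] at this
  have hU2 : ∀ σ, U σ * (U σ)ᴴ = 1 := fun σ => by
    have := (hUunit σ).2
    rwa [Matrix.star_eq_conjTranspose] at this
  -- trace (f σᴴ * f σ) = trace (Aᴴ * A)
  have hnormf : ∀ σ, Matrix.trace ((f σ)ᴴ * f σ) = Matrix.trace (Aᴴ * A) := by
    intro σ
    have e1 : (f σ)ᴴ = U σ * Aᴴ * (U σ)ᴴ := by
      show (U σ * A * (U σ)ᴴ)ᴴ = _
      rw [Matrix.conjTranspose_mul, Matrix.conjTranspose_mul,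
        Matrix.conjTranspose_conjTranspose]
      noncomm_ring
    have : (f σ)ᴴ * f σ = U σ * (Aᴴ * A) * (U σ)ᴴ := by
      rw [e1]
      calc U σ * Aᴴ * (U σ)ᴴ * (U σ * A * (U σ)ᴴ)
          = U σ * Aᴴ * ((U σ)ᴴ * U σ) * (A * (U σ)ᴴ) := by noncomm_ring
        _ = U σ * (Aᴴ * A) * (U σ)ᴴ := by rw [hU1]; noncomm_ring
    rw [this, Matrix.trace_mul_cycle, hU1, one_mul]
  -- the continuous linear functional X ↦ trace (Qᴴ * X)
  let ψ : Matrix (Fin n) (Fin n) ℂ →L[ℂ] ℂ :=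
    LinearMap.toContinuousLinearMap
      ((Matrix.traceLinearMap (Fin n) ℂ ℂ).comp (LinearMap.mulLeft ℂ Qᴴ))
  have hψ : ∀ X, ψ X = Matrix.trace (Qᴴ * X) := fun X => rfl
  have hψint : ∫ σ, ψ (f σ) ∂ν = Matrix.trace (Qᴴ * Q) := by
    rw [ψ.integral_comp_comm hfint]; rfl
  -- trace (Qᴴ Q) is real (self-conjugate)
  have hQconj : (starRingEnd ℂ) (Matrix.trace (Qᴴ * Q)) = Matrix.trace (Qᴴ * Q) := by
    rw [← RCLike.star_def, ← Matrix.trace_conjTranspose, Matrix.conjTranspose_mul,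
      Matrix.conjTranspose_conjTranspose]
  have hstargen : ∀ M : Matrix (Fin n) (Fin n) ℂ,
      Matrix.trace (Mᴴ * Q) = (starRingEnd ℂ) (Matrix.trace (Qᴴ * M)) := by
    intro M
    rw [← RCLike.star_def, ← Matrix.trace_conjTranspose, Matrix.conjTranspose_mul,
      Matrix.conjTranspose_conjTranspose]
  -- define g and compute its integral
  set g : C → ℂ := fun σ => Matrix.trace ((f σ - Q)ᴴ * (f σ - Q)) with hgdef
  have hgpt : ∀ σ, g σ = Matrix.trace (Aᴴ * A) + Matrix.trace (Qᴴ * Q)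
      - (starRingEnd ℂ) (ψ (f σ)) - ψ (f σ) := by
    intro σ
    have hexp : (f σ - Q)ᴴ * (f σ - Q)
        = (f σ)ᴴ * f σ - (f σ)ᴴ * Q - Qᴴ * f σ + Qᴴ * Q := by
      simp only [Matrix.conjTranspose_sub]; noncomm_ring
    have hstar : Matrix.trace ((f σ)ᴴ * Q) = (starRingEnd ℂ) (ψ (f σ)) := by
      rw [hψ]; exact hstargen (f σ)
    rw [hgdef]
    simp only [hexp, Matrix.trace_add, Matrix.trace_sub, hnormf σ, hstar, hψ]
    ring
  have hψc : Continuous fun σ => ψ (f σ) := ψ.continuous.comp hfc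
  have hψfint : Integrable (fun σ => ψ (f σ)) ν :=
    hψc.integrable_of_hasCompactSupport ((isClosed_tsupport _).isCompact)
  have hψcfint : Integrable (fun σ => (starRingEnd ℂ) (ψ (f σ))) ν :=
    (continuous_star.comp hψc).integrable_of_hasCompactSupport
      ((isClosed_tsupport _).isCompact)
  have hc : Integrable (fun _ : C => Matrix.trace (Aᴴ * A) + Matrix.trace (Qᴴ * Q)) ν :=
    integrable_const _
  have h1 : Integrable (fun σ => Matrix.trace (Aᴴ * A) + Matrix.trace (Qᴴ * Q)
      - (starRingEnd ℂ) (ψ (f σ))) ν := hc.sub hψcfint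
  have hgint0 : ∫ σ, g σ ∂ν = 0 := by
    rw [integral_congr_ae (Filter.Eventually.of_forall hgpt),
      integral_sub h1 hψfint, integral_sub hc hψcfint, integral_const, integral_conj,
      hψint, hQconj, probReal_univ, one_smul, hA]
    ring
  -- the real-valued nonnegative function
  set h : C → ℝ := fun σ => ∑ j, ∑ i, Complex.normSq ((f σ - Q) i j) with hhdef
  have hgh : ∀ σ, g σ = ((h σ : ℝ) : ℂ) := fun σ => trace_conjTranspose_mul_self_eq _
  have hgc : Continuous g := by
    have : Continuous fun σ => f σ - Q := hfc.sub continuous_const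
    simpa [hgdef, Function.comp_def] using
      (Matrix.traceLinearMap (Fin n) ℂ ℂ).toContinuousLinearMap.continuous.comp
        ((this.matrix_conjTranspose).matrix_mul this)
  have hhc : Continuous h := by
    have : Continuous fun σ => (g σ).re := Complex.continuous_re.comp hgc
    have heq : (fun σ => (g σ).re) = h := by
      funext σ; rw [hgh σ]; simp
    rwa [heq] at this
  have hgint : Integrable g ν :=
    hgc.integrable_of_hasCompactSupport ((isClosed_tsupport _).isCompact)
  have hhint0 : ∫ σ, h σ ∂ν = 0 := by
    have e : (∫ σ, ((h σ : ℝ) : ℂ) ∂ν) = ((∫ σ, h σ ∂ν : ℝ) : ℂ) := integral_ofReal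
    have hcast : ((∫ σ, h σ ∂ν : ℝ) : ℂ) = 0 := by
      rw [← e, ← hgint0]
      exact integral_congr_ae (Filter.Eventually.of_forall fun σ => (hgh σ).symm)
    exact_mod_cast hcast
  have hhnn : ∀ σ, 0 ≤ h σ := fun σ =>
    Finset.sum_nonneg fun j _ => Finset.sum_nonneg fun i _ => Complex.normSq_nonneg _
  have hhzero : h = 0 := by
    have hae : h =ᵐ[ν] 0 := by
      have hint : Integrable h ν :=
        hhc.integrable_of_hasCompactSupport ((isClosed_tsupport _).isCompact)
      exact (integral_eq_zero_iff_of_nonneg hhnn hint).mp hhint0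
    exact (hhc.ae_eq_iff_eq ν continuous_const).mp hae
  have hfQ : ∀ σ, f σ = Q := by
    intro σ
    have : g σ = 0 := by rw [hgh σ, congrFun hhzero σ]; simp
    have := eq_zero_of_trace_conjTranspose_mul_self _ this
    exact sub_eq_zero.mp this
  have hAQ : A = Q := by
    have := hfQ σ₀
    simpa [hfdef, hσ₀] using this
  intro σ
  rw [show U σ * A * (U σ)ᴴ = f σ from rfl, hfQ σ, hAQ]
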